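/- In the sequence (C_n mod 5)_{n≥0}, the maximal blocks of nonzero residues are: the initial block (C_0, C_1, C_2) ≡ (1,1,2) (mod 5) at position 0, and thereafter every maximal nonzero block has length exactly 4 and equals one of (1,3,3,1), (2,1,1,2), (3,4,4,3), (4,2,2,4) modulo 5. -/

import Mathlib

open Nat

local instance : Fact (Nat.Prime 5) := ⟨by norm_num⟩

lemma lucas5 (n k : ℕ) :
    ((n.choose k : ℕ) : ZMod 5) =
      (((n % 5).choose (k % 5) : ℕ) : ZMod 5) * (((n / 5).choose (k / 5) : ℕ) : ZMod 5) := by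
  have h := (Choose.choose_modEq_choose_mod_mul_choose_div_nat (n := n) (k := k) (p := 5))
  have := (ZMod.natCast_eq_natCast_iff _ _ _).mpr h
  rw [this]; push_cast; ring

-- central binomial digit recurrences
lemma B0 (q : ℕ) : ((centralBinom (5*q) : ℕ) : ZMod 5) = (centralBinom q : ℕ) := by
  rw [centralBinom_eq_two_mul_choose, centralBinom_eq_two_mul_choose, lucas5]
  have h1 : 2 * (5*q) % 5 = 0 := by omega
  have h2 : 2 * (5*q) / 5 = 2 * q := by omega
  have h3 : (5*q) % 5 = 0 := by omega
  have h4 : (5*q) / 5 = q := by omega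
  rw [h1, h2, h3, h4]; simp

lemma B1 (q : ℕ) : ((centralBinom (5*q+1) : ℕ) : ZMod 5) = 2 * (centralBinom q : ℕ) := by
  rw [centralBinom_eq_two_mul_choose, centralBinom_eq_two_mul_choose, lucas5]
  have h1 : 2 * (5*q+1) % 5 = 2 := by omega
  have h2 : 2 * (5*q+1) / 5 = 2 * q := by omega
  have h3 : (5*q+1) % 5 = 1 := by omega
  have h4 : (5*q+1) / 5 = q := by omega
  rw [h1, h2, h3, h4]; norm_num

lemma B2 (q : ℕ) : ((centralBinom (5*q+2) : ℕ) : ZMod 5) = (centralBinom q : ℕ) := by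
  rw [centralBinom_eq_two_mul_choose, centralBinom_eq_two_mul_choose, lucas5]
  have h1 : 2 * (5*q+2) % 5 = 4 := by omega
  have h2 : 2 * (5*q+2) / 5 = 2 * q := by omega
  have h3 : (5*q+2) % 5 = 2 := by omega
  have h4 : (5*q+2) / 5 = q := by omega
  rw [h1, h2, h3, h4, show Nat.choose 4 2 = 6 from rfl,
    show ((6:ℕ) : ZMod 5) = 1 by decide, one_mul]

lemma B3 (q : ℕ) : ((centralBinom (5*q+3) : ℕ) : ZMod 5) = 0 := by
  rw [centralBinom_eq_two_mul_choose, lucas5]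
  have h1 : 2 * (5*q+3) % 5 = 1 := by omega
  have h3 : (5*q+3) % 5 = 3 := by omega
  rw [h1, h3, show Nat.choose 1 3 = 0 from rfl]; simp

lemma B4 (q : ℕ) : ((centralBinom (5*q+4) : ℕ) : ZMod 5) = 0 := by
  rw [centralBinom_eq_two_mul_choose, lucas5]
  have h1 : 2 * (5*q+4) % 5 = 3 := by omega
  have h3 : (5*q+4) % 5 = 4 := by omega
  rw [h1, h3, show Nat.choose 3 4 = 0 from rfl]; simp

lemma catHelper (n : ℕ) :
    ((n+1 : ℕ) : ZMod 5) * ((catalan n : ℕ) : ZMod 5) = ((centralBinom n : ℕ) : ZMod 5) := by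
  rw [← Nat.cast_mul, succ_mul_catalan_eq_centralBinom]

lemma C0 (m : ℕ) : ((catalan (5*m) : ℕ) : ZMod 5) = ((centralBinom m : ℕ) : ZMod 5) := by
  have h := catHelper (5*m)
  have e : ((5*m+1 : ℕ) : ZMod 5) = 1 := by
    push_cast
    rw [show ((5:ZMod 5)) = 0 by decide]; ring
  rw [e, one_mul, B0] at h
  exact h

lemma C1 (m : ℕ) : ((catalan (5*m+1) : ℕ) : ZMod 5) = ((centralBinom m : ℕ) : ZMod 5) := by
  have h := catHelper (5*m+1)
  have e : ((5*m+1+1 : ℕ) : ZMod 5) = 2 := by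
    push_cast
    rw [show ((5:ZMod 5)) = 0 by decide]; ring
  rw [e, show (5*m+1 : ℕ) = 5*m+1 from rfl, B1] at h
  exact mul_left_cancel₀ (show (2 : ZMod 5) ≠ 0 by decide) h

lemma C2 (m : ℕ) : ((catalan (5*m+2) : ℕ) : ZMod 5) = 2 * ((centralBinom m : ℕ) : ZMod 5) := by
  have h := catHelper (5*m+2)
  have e : ((5*m+2+1 : ℕ) : ZMod 5) = 3 := by
    push_cast
    rw [show ((5:ZMod 5)) = 0 by decide]; ring
  rw [e, B2] at h
  apply mul_left_cancel₀ (show (3 : ZMod 5) ≠ 0 by decide)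
  rw [h, ← mul_assoc, show (3:ZMod 5) * 2 = 1 by decide, one_mul]

lemma C3 (m : ℕ) : ((catalan (5*m+3) : ℕ) : ZMod 5) = 0 := by
  have h := catHelper (5*m+3)
  have e : ((5*m+3+1 : ℕ) : ZMod 5) = 4 := by
    push_cast
    rw [show ((5:ZMod 5)) = 0 by decide]; ring
  rw [e, B3] at h
  have h2 : (4 : ZMod 5) * (4 * ((catalan (5*m+3) : ℕ) : ZMod 5)) = 0 := by
    rw [h, mul_zero]
  rwa [← mul_assoc, show (4:ZMod 5) * 4 = 1 by decide, one_mul] at h2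

lemma cat_add (n : ℕ) : catalan n + (2*n).choose (n+1) = (2*n).choose n := by
  apply Nat.eq_of_mul_eq_mul_right (show 0 < n+1 by omega)
  rw [add_mul, Nat.choose_succ_right_eq (2*n) n, show 2*n - n = n by omega,
    mul_comm (catalan n) (n+1), succ_mul_catalan_eq_centralBinom,
    centralBinom_eq_two_mul_choose]
  ring

lemma C4 (m : ℕ) : ((catalan (5*m+4) : ℕ) : ZMod 5)
    = 2 * ((centralBinom (m+1) : ℕ) : ZMod 5) := by
  have hid := cat_add (5*m+4)
  have hcast : ((catalan (5*m+4) : ℕ) : ZMod 5)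
      + (((2*(5*m+4)).choose (5*m+4+1) : ℕ) : ZMod 5)
      = (((2*(5*m+4)).choose (5*m+4) : ℕ) : ZMod 5) := by
    rw [← Nat.cast_add, hid]
  have hz : (((2*(5*m+4)).choose (5*m+4) : ℕ) : ZMod 5) = 0 := by
    rw [lucas5, show 2*(5*m+4) % 5 = 3 by omega, show (5*m+4) % 5 = 4 by omega,
      show Nat.choose 3 4 = 0 from rfl]
    simp
  have hx : (((2*(5*m+4)).choose (5*m+4+1) : ℕ) : ZMod 5)
      = (((2*m+1).choose (m+1) : ℕ) : ZMod 5) := by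
    rw [lucas5, show 2*(5*m+4) % 5 = 3 by omega, show (5*m+4+1) % 5 = 0 by omega,
      show 2*(5*m+4) / 5 = 2*m+1 by omega, show (5*m+4+1) / 5 = m+1 by omega,
      show Nat.choose 3 0 = 1 from rfl]
    simp
  have hB : centralBinom (m+1) = 2 * (2*m+1).choose (m+1) := by
    rw [centralBinom_eq_two_mul_choose, show 2*(m+1) = (2*m+1)+1 by ring,
      Nat.choose_succ_succ (2*m+1) m]
    have hs : (2*m+1).choose m = (2*m+1).choose (m+1) := by
      rw [← Nat.choose_symm (show m+1 ≤ 2*m+1 by omega), show (2*m+1) - (m+1) = m by omega]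
    rw [hs]; ring
  rw [hx, hz] at hcast
  have hcat : ((catalan (5*m+4) : ℕ) : ZMod 5) = - (((2*m+1).choose (m+1) : ℕ) : ZMod 5) :=
    eq_neg_of_add_eq_zero_left hcast
  rw [hcat, hB]
  push_cast
  rw [← mul_assoc, show (2:ZMod 5)*2 = -1 by decide]
  ring

lemma mod5_val (n : ℕ) : n % 5 = ((n : ZMod 5)).val := (ZMod.val_natCast (n := 5) n).symm

lemma mod5_zero_iff (n : ℕ) : n % 5 = 0 ↔ ((n : ℕ) : ZMod 5) = 0 := by
  rw [mod5_val, ZMod.val_eq_zero]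

lemma zmod5_cases (b : ZMod 5) (hb : b ≠ 0) : b = 1 ∨ b = 2 ∨ b = 3 ∨ b = 4 := by
  revert hb; revert b; decide




/-- A maximal block of nonzero residues modulo `5` of length `L` starting at
position `i` in the sequence of Catalan numbers. -/
def catMaxNonzeroBlock5 (i L : ℕ) : Prop :=
  1 ≤ L ∧ (∀ t < L, catalan (i + t) % 5 ≠ 0) ∧
    catalan (i + L) % 5 = 0 ∧ (i = 0 ∨ catalan (i - 1) % 5 = 0)

theorem catalan_mod_five_nonzero_blocks :
    (catMaxNonzeroBlock5 0 3 ∧ catalan 0 % 5 = 1 ∧ catalan 1 % 5 = 1 ∧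
      catalan 2 % 5 = 2) ∧
    (∀ i L : ℕ, 1 ≤ i → catMaxNonzeroBlock5 i L → L = 4 ∧
      ([catalan i % 5, catalan (i+1) % 5, catalan (i+2) % 5,
        catalan (i+3) % 5] = [1,3,3,1] ∨
       [catalan i % 5, catalan (i+1) % 5, catalan (i+2) % 5,
        catalan (i+3) % 5] = [2,1,1,2] ∨
       [catalan i % 5, catalan (i+1) % 5, catalan (i+2) % 5,
        catalan (i+3) % 5] = [3,4,4,3] ∨
       [catalan i % 5, catalan (i+1) % 5, catalan (i+2) % 5,
        catalan (i+3) % 5] = [4,2,2,4])) := by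
  constructor
  · refine ⟨⟨by norm_num, ?_, ?_, Or.inl rfl⟩, ?_, ?_, ?_⟩
    · intro t ht
      interval_cases t <;>
        simp [catalan_zero, catalan_one, catalan_two]
    · show catalan 3 % 5 = 0
      rw [catalan_three]
    · rw [catalan_zero]
    · rw [catalan_one]
    · rw [catalan_two]
  · rintro i L hi ⟨hL, hnz, hzend, hprev⟩
    have hprev' : catalan (i-1) % 5 = 0 := by
      rcases hprev with h | h
      · omega
      · exact h
    have hnz0 : ((catalan i : ℕ) : ZMod 5) ≠ 0 := by
      have := hnz 0 hL
      rw [add_zero] at this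
      exact fun h => this ((mod5_zero_iff _).mpr h)
    have h5 : i % 5 = 0 ∨ i % 5 = 1 ∨ i % 5 = 2 ∨ i % 5 = 3 ∨ i % 5 = 4 := by omega
    rcases h5 with h5 | h5 | h5 | h5 | h5
    · -- i = 5*m with m ≥ 1, contradiction
      exfalso
      obtain ⟨m, rfl⟩ : ∃ m, i = 5*m := ⟨i/5, by omega⟩
      have hm : 1 ≤ m := by omega
      have e : 5*m - 1 = 5*(m-1)+4 := by omega
      rw [e] at hprev'
      have h1 : ((catalan (5*(m-1)+4) : ℕ) : ZMod 5) = 0 := (mod5_zero_iff _).mp hprev'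
      rw [C4, show m-1+1 = m by omega] at h1
      have h2 : ((centralBinom m : ℕ) : ZMod 5) = 0 := by
        rcases mul_eq_zero.mp h1 with h | h
        · exact absurd h (by decide)
        · exact h
      exact hnz0 (by rw [C0, h2])
    · exfalso
      obtain ⟨m, rfl⟩ : ∃ m, i = 5*m+1 := ⟨i/5, by omega⟩
      have e : 5*m+1 - 1 = 5*m := by omega
      rw [e] at hprev'
      have h1 : ((centralBinom m : ℕ) : ZMod 5) = 0 := by
        rw [← C0]; exact (mod5_zero_iff _).mp hprev'
      exact hnz0 (by rw [C1, h1])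
    · exfalso
      obtain ⟨m, rfl⟩ : ∃ m, i = 5*m+2 := ⟨i/5, by omega⟩
      have e : 5*m+2 - 1 = 5*m+1 := by omega
      rw [e] at hprev'
      have h1 : ((centralBinom m : ℕ) : ZMod 5) = 0 := by
        rw [← C1]; exact (mod5_zero_iff _).mp hprev'
      exact hnz0 (by rw [C2, h1, mul_zero])
    · exfalso
      obtain ⟨m, rfl⟩ : ∃ m, i = 5*m+3 := ⟨i/5, by omega⟩
      exact hnz0 (by rw [C3])
    · -- main case: i = 5*m+4
      obtain ⟨m, rfl⟩ : ∃ m, i = 5*m+4 := ⟨i/5, by omega⟩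
      set a : ZMod 5 := ((centralBinom (m+1) : ℕ) : ZMod 5) with ha_def
      have e0 : ((catalan (5*m+4) : ℕ) : ZMod 5) = 2*a := C4 m
      have e1 : ((catalan (5*m+4+1) : ℕ) : ZMod 5) = a := by
        rw [show 5*m+4+1 = 5*(m+1) by ring, C0]
      have e2 : ((catalan (5*m+4+2) : ℕ) : ZMod 5) = a := by
        rw [show 5*m+4+2 = 5*(m+1)+1 by ring, C1]
      have e3 : ((catalan (5*m+4+3) : ℕ) : ZMod 5) = 2*a := by
        rw [show 5*m+4+3 = 5*(m+1)+2 by ring, C2]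
      have e4 : catalan (5*m+4+4) % 5 = 0 := by
        rw [mod5_zero_iff, show 5*m+4+4 = 5*(m+1)+3 by ring, C3]
      have ha : a ≠ 0 := by
        intro h
        exact hnz0 (by rw [e0, h, mul_zero])
      have h2a : (2:ZMod 5) * a ≠ 0 :=
        mul_ne_zero (by decide) ha
      have hL4 : L = 4 := by
        have hLle : L ≤ 4 := by
          by_contra h
          exact hnz 4 (by omega) e4
        interval_cases L
        · exact absurd ((mod5_zero_iff _).mp hzend) (by rw [e1]; exact ha)
        · exact absurd ((mod5_zero_iff _).mp hzend) (by rw [e2]; exact ha)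
        · exact absurd ((mod5_zero_iff _).mp hzend) (by rw [e3]; exact h2a)
        · rfl
      refine ⟨hL4, ?_⟩
      have v0 : catalan (5*m+4) % 5 = ((2*a : ZMod 5)).val := by rw [mod5_val, e0]
      have v1 : catalan (5*m+4+1) % 5 = (a : ZMod 5).val := by rw [mod5_val, e1]
      have v2 : catalan (5*m+4+2) % 5 = (a : ZMod 5).val := by rw [mod5_val, e2]
      have v3 : catalan (5*m+4+3) % 5 = ((2*a : ZMod 5)).val := by rw [mod5_val, e3]
      rcases zmod5_cases a ha with h | h | h | h <;> rw [h] at v0 v1 v2 v3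
      · exact Or.inr (Or.inl (by rw [v0, v1, v2, v3]; decide))
      · exact Or.inr (Or.inr (Or.inr (by rw [v0, v1, v2, v3]; decide)))
      · exact Or.inl (by rw [v0, v1, v2, v3]; decide)
      · exact Or.inr (Or.inr (Or.inl (by rw [v0, v1, v2, v3]; decide)))
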